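/- For a positive integer m, nonzero real λ, and nonnegative integers n ≥ i ≥ 0, the degenerate Whitney numbers of the first kind satisfy V_{m,λ}(n,i) = ∑_{k=i}^{n} (−1)^{k−i}·C(k,i)·m^{n−k}·S_{1,λ/m}(n,k)·⟨1⟩_{k−i,λ}, where S_{1,λ/m} are the degenerate Stirling numbers of the first kind with parameter λ/m. -/

import Mathlib

open Finset

noncomputable def dff (lam x : ℝ) (n : ℕ) : ℝ := ∏ i ∈ Finset.range n, (x - i * lam)

noncomputable def drf (lam x : ℝ) (n : ℕ) : ℝ := ∏ i ∈ Finset.range n, (x + i * lam)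

noncomputable def Acoef (lam : ℝ) (k i : ℕ) : ℝ :=
  (-1 : ℝ) ^ (k - i) * (Nat.choose k i : ℝ) * drf lam 1 (k - i)

lemma dff_succ (lam z : ℝ) (j : ℕ) : dff lam z (j+1) = dff lam z j * (z - j * lam) := by
  simp [dff, Finset.prod_range_succ]

lemma drf_succ (lam : ℝ) (j : ℕ) : drf lam 1 (j+1) = drf lam 1 j * (1 + j * lam) := by
  simp [drf, Finset.prod_range_succ]

lemma keyA (lam : ℝ) : ∀ (k : ℕ) (y : ℝ),
    dff lam y k = ∑ i ∈ range (k+1), Acoef lam k i * dff lam (y+1) i := by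
  intro k
  induction k with
  | zero => intro y; simp [dff, Acoef, drf]
  | succ k ih =>
    intro y
    rw [dff_succ, ih, Finset.sum_mul]
    have hterm : ∀ i ∈ range (k+1),
        Acoef lam k i * dff lam (y+1) i * (y - k * lam)
          = Acoef lam k i * dff lam (y+1) (i+1)
            - (Acoef lam k i * (1 + ((k : ℝ) - i) * lam)) * dff lam (y+1) i := by
      intro i hi
      rw [dff_succ]
      ring
    rw [Finset.sum_congr rfl hterm, Finset.sum_sub_distrib]
    -- expand RHS
    rw [Finset.sum_range_succ' (fun i => Acoef lam (k+1) i * dff lam (y+1) i)]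
    rw [Finset.sum_range_succ' (fun i => (Acoef lam k i * (1 + ((k : ℝ) - i) * lam)) * dff lam (y+1) i)]
    have hext : ∑ i ∈ range k, (Acoef lam k (i+1) * (1 + ((k : ℝ) - ((i+1 : ℕ) : ℝ)) * lam)) * dff lam (y+1) (i+1)
        = ∑ i ∈ range (k+1), (Acoef lam k (i+1) * (1 + ((k : ℝ) - ((i+1 : ℕ) : ℝ)) * lam)) * dff lam (y+1) (i+1) := by
      rw [Finset.sum_range_succ]
      have : Acoef lam k (k+1) = 0 := by
        simp [Acoef, Nat.choose_eq_zero_of_lt (Nat.lt_succ_self k)]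
      rw [this]; ring
    rw [hext, sub_add_eq_sub_sub, ← Finset.sum_sub_distrib]
    have hpt : ∀ i ∈ range (k+1),
        Acoef lam k i * dff lam (y+1) (i+1)
          - (Acoef lam k (i+1) * (1 + ((k : ℝ) - ((i+1 : ℕ) : ℝ)) * lam)) * dff lam (y+1) (i+1)
        = Acoef lam (k+1) (i+1) * dff lam (y+1) (i+1) := by
      intro i hi
      rw [Finset.mem_range] at hi
      have hik : i ≤ k := Nat.lt_succ_iff.mp hi
      rcases eq_or_lt_of_le hik with h | h
      · subst h
        have h1 : Acoef lam i (i+1) = 0 := by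
          simp [Acoef, Nat.choose_eq_zero_of_lt (Nat.lt_succ_self i)]
        have h2 : Acoef lam i i = 1 := by simp [Acoef, drf]
        have h3 : Acoef lam (i+1) (i+1) = 1 := by simp [Acoef, drf]
        rw [h1, h2, h3]; ring
      · obtain ⟨j, hj⟩ := Nat.exists_eq_add_of_lt h
        subst hj
        have e1 : (i + j + 1) - i = j + 1 := by omega
        have e2 : (i + j + 1) - (i + 1) = j := by omega
        have e3 : (i + j + 1 + 1) - (i + 1) = j + 1 := by omega
        have hcast : ((i + j + 1 : ℕ) : ℝ) - ((i : ℕ) : ℝ) - ((1 : ℕ) : ℝ) = (j : ℝ) := by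
          push_cast; ring
        have hpascal : (Nat.choose (i+j+1+1) (i+1) : ℝ)
            = (Nat.choose (i+j+1) i : ℝ) + (Nat.choose (i+j+1) (i+1) : ℝ) := by
          rw [Nat.choose_succ_succ (i+j+1) i]; push_cast; ring
        simp only [Acoef, e1, e2, e3]
        rw [hpascal, drf_succ]
        have hc : ((i : ℝ) + (j : ℝ) + 1) - ((i : ℝ) + 1) = (j : ℝ) := by ring
        push_cast
        rw [hc]
        ring
    rw [Finset.sum_congr rfl hpt]
    have hA0 : Acoef lam (k+1) 0 * dff lam (y+1) 0
        = -((Acoef lam k 0 * (1 + ((k : ℝ) - (0:ℕ)) * lam)) * dff lam (y+1) 0) := by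
      simp only [Acoef, Nat.sub_zero, Nat.choose_zero_right, drf_succ, pow_succ]
      push_cast
      ring
    rw [hA0]
    ring

lemma lemB (m : ℝ) (hm : m ≠ 0) (lam x : ℝ) (k : ℕ) :
    m ^ k * dff (lam / m) x k = dff lam (m * x) k := by
  simp only [dff]
  rw [← Finset.card_range k, ← Finset.prod_const m, Finset.card_range,
    ← Finset.prod_mul_distrib]
  refine Finset.prod_congr rfl fun j _ => ?_
  field_simp

lemma lemC (m : ℕ) (hm : 1 ≤ m) (lam : ℝ) (S1 : ℕ → ℕ → ℝ)
    (hS1 : ∀ (x : ℝ) (n : ℕ), dff 1 x n =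
      ∑ k ∈ Finset.range (n + 1), S1 n k * dff (lam / m) x k)
    (n : ℕ) (x : ℝ) :
    (m : ℝ) ^ n * dff 1 x n =
      ∑ i ∈ range (n+1), (∑ k ∈ Finset.Icc i n,
        S1 n k * (m : ℝ) ^ (n - k) * Acoef lam k i) * dff lam ((m : ℝ) * x + 1) i := by
  have hm0 : (m : ℝ) ≠ 0 := by positivity
  rw [hS1 x n, Finset.mul_sum]
  have step1 : ∀ k ∈ range (n+1),
      (m : ℝ) ^ n * (S1 n k * dff (lam / m) x k)
        = ∑ i ∈ range (k+1),
            S1 n k * (m : ℝ) ^ (n - k) * Acoef lam k i * dff lam ((m : ℝ) * x + 1) i := by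
    intro k hk
    rw [Finset.mem_range, Nat.lt_succ_iff] at hk
    have hpow : (m : ℝ) ^ n = (m : ℝ) ^ (n - k) * (m : ℝ) ^ k := by
      rw [← pow_add]
      congr 1
      omega
    have : (m : ℝ) ^ n * (S1 n k * dff (lam / m) x k)
        = S1 n k * (m : ℝ) ^ (n - k) * ((m : ℝ) ^ k * dff (lam / m) x k) := by
      rw [hpow]; ring
    rw [this, lemB (m : ℝ) hm0 lam x k, keyA lam k ((m : ℝ) * x), Finset.mul_sum]
    refine Finset.sum_congr rfl fun i _ => ?_
    ring
  rw [Finset.sum_congr rfl step1]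
  rw [Finset.sum_comm' (t' := range (n+1)) (s' := fun i => Finset.Icc i n)
    (by intro k i
        simp only [Finset.mem_range, Finset.mem_Icc, Nat.lt_succ_iff]
        omega)]
  refine Finset.sum_congr rfl fun i _ => ?_
  rw [Finset.sum_mul]

lemma uniq (m : ℕ) (hm : 1 ≤ m) (lam : ℝ) (hlam : lam ≠ 0) (n : ℕ) (c : ℕ → ℝ)
    (h : ∀ x : ℝ, ∑ k ∈ range (n+1), c k * dff lam ((m : ℝ) * x + 1) k = 0) :
    ∀ i, i ≤ n → c i = 0 := by
  intro i
  induction i using Nat.strong_induction_on with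
  | _ i ih =>
    intro hin
    have hm0 : (m : ℝ) ≠ 0 := by positivity
    have hx := h (((i : ℝ) * lam - 1) / m)
    have he : (m : ℝ) * (((i : ℝ) * lam - 1) / m) + 1 = (i : ℝ) * lam := by
      field_simp
      ring
    rw [he] at hx
    rw [Finset.sum_eq_single i ?h0 ?h1] at hx
    · have hne : dff lam ((i : ℝ) * lam) i ≠ 0 := by
        simp only [dff]
        rw [Finset.prod_ne_zero_iff]
        intro t ht
        rw [Finset.mem_range] at ht
        have : (i : ℝ) ≠ (t : ℝ) := by
          exact_mod_cast Nat.ne_of_gt ht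
        intro hc
        apply this
        have := sub_eq_zero.mp hc
        exact mul_right_cancel₀ hlam this
      exact (mul_eq_zero.mp hx).resolve_right hne
    case h0 =>
      intro k hk hki
      rw [Finset.mem_range, Nat.lt_succ_iff] at hk
      rcases lt_or_gt_of_ne hki with hlt | hgt
      · rw [ih k hlt hk]; ring
      · have : dff lam ((i : ℝ) * lam) k = 0 := by
          simp only [dff]
          refine Finset.prod_eq_zero (Finset.mem_range.mpr hgt) ?_
          ring
        rw [this]; ring
    case h1 =>
      intro hni
      exact absurd (Finset.mem_range.mpr (Nat.lt_succ_of_le hin)) hni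

theorem stmt12 (m : ℕ) (hm : 1 ≤ m) (lam : ℝ) (hlam : lam ≠ 0) (V S1 : ℕ → ℕ → ℝ)
    (hV : ∀ (x : ℝ) (n : ℕ), (m : ℝ) ^ n * dff 1 x n =
      ∑ k ∈ Finset.range (n + 1), V n k * dff lam ((m : ℝ) * x + 1) k)
    (hS1 : ∀ (x : ℝ) (n : ℕ), dff 1 x n =
      ∑ k ∈ Finset.range (n + 1), S1 n k * dff (lam / m) x k)
    (n i : ℕ) (hi : i ≤ n) :
    V n i = ∑ k ∈ Finset.Icc i n, (-1 : ℝ) ^ (k - i) * (Nat.choose k i : ℝ) *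
      (m : ℝ) ^ (n - k) * S1 n k * drf lam 1 (k - i) := by
  have h0 : ∀ x : ℝ, ∑ k ∈ range (n+1),
      (V n k - (∑ j ∈ Finset.Icc k n, S1 n j * (m : ℝ) ^ (n - j) * Acoef lam j k)) *
        dff lam ((m : ℝ) * x + 1) k = 0 := by
    intro x
    simp only [sub_mul]
    rw [Finset.sum_sub_distrib, ← hV x n, ← lemC m hm lam S1 hS1 n x]
    ring
  have hz := uniq m hm lam hlam n _ h0 i hi
  have hV' : V n i = ∑ j ∈ Finset.Icc i n, S1 n j * (m : ℝ) ^ (n - j) * Acoef lam j i := by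
    linarith [hz]
  rw [hV']
  refine Finset.sum_congr rfl fun k _ => ?_
  simp only [Acoef]
  ring
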